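/- Let Q = circ(q_1,...,q_p) be a circulant quaternion matrix and O = F_p·l. If O·Q·O* = Diag(q̂_1,...,q̂_p), then the diagonal entries satisfy q̂_s = Σ_{m=1}^p ω^{(s-1)(m-1)}·conj(q_m) for each s, i.e., (q̂_1,...,q̂_p)^T = √p·F_p·(conj(q_1),...,conj(q_p))^T. -/

import Mathlib

open Matrix Quaternion

/-- Embedding of the complex numbers into the quaternions (span of 1 and i). -/
noncomputable def cq (z : ℂ) : ℍ[ℝ] := ⟨z.re, z.im, 0, 0⟩

/-- The quaternion imaginary unit j. -/
noncomputable def qj : ℍ[ℝ] := ⟨0, 0, 1, 0⟩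

/-- The octonions, built from the quaternions by the Cayley–Dickson process:
`(a, b)` represents `a + b·l`. -/
def Oct : Type := ℍ[ℝ] × ℍ[ℝ]

noncomputable instance : AddCommGroup Oct :=
  inferInstanceAs (AddCommGroup (ℍ[ℝ] × ℍ[ℝ]))

/-- Cayley–Dickson multiplication, matching the standard octonion
multiplication table (e.g. `l·i = -il`, `(il)·(jl) = -k`). -/
noncomputable instance : Mul Oct :=
  ⟨fun x y => (x.1 * y.1 - star y.2 * x.2, y.2 * x.1 + x.2 * star y.1)⟩

noncomputable instance : One Oct := ⟨((1 : ℍ[ℝ]), (0 : ℍ[ℝ]))⟩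

/-- Octonion conjugation. -/
noncomputable instance : Star Oct := ⟨fun x => (star x.1, -x.2)⟩

/-- Embedding of the quaternions into the octonions. -/
noncomputable def qo (q : ℍ[ℝ]) : Oct := (q, 0)

/-- Embedding of the complex numbers into the octonions. -/
noncomputable def co (z : ℂ) : Oct := (cq z, 0)

/-- The octonion imaginary unit l. -/
noncomputable def ol : Oct := ((0 : ℍ[ℝ]), (1 : ℍ[ℝ]))

/-- The octonion imaginary unit j (the quaternion j viewed as an octonion). -/
noncomputable def oj : Oct := (qj, 0)

lemma oct_mul_def (x y : Oct) :
    x * y = (x.1 * y.1 - star y.2 * x.2, y.2 * x.1 + x.2 * star y.1) := rfl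

lemma oct_star_def (x : Oct) : star x = (star x.1, -x.2) := rfl

lemma oct_sum_eq {ι : Type*} (t : Finset ι) (f : ι → Oct) (a b : ι → ℍ[ℝ])
    (h : ∀ i ∈ t, f i = (a i, b i)) :
    ∑ i ∈ t, f i = (∑ i ∈ t, a i, ∑ i ∈ t, b i) := by
  classical
  induction t using Finset.induction with
  | empty => rfl
  | @insert j t hj ih =>
      rw [Finset.sum_insert hj, Finset.sum_insert hj, Finset.sum_insert hj,
        ih fun i hi => h i (Finset.mem_insert_of_mem hi), h j (Finset.mem_insert_self j t)]
      rfl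

lemma cq_mul (z w : ℂ) : cq (z * w) = cq z * cq w := by
  ext <;> simp only [Quaternion.re_mul, Quaternion.imI_mul,
    Quaternion.imJ_mul, Quaternion.imK_mul] <;> simp [cq, Complex.mul_re, Complex.mul_im]

lemma cq_add (z w : ℂ) : cq (z + w) = cq z + cq w := by
  ext <;> simp only [Quaternion.re_add, Quaternion.imI_add, Quaternion.imJ_add,
    Quaternion.imK_add] <;> simp [cq]

lemma cq_zero : cq 0 = 0 := by ext <;> simp [cq]

lemma cq_star (z : ℂ) : cq (star z) = star (cq z) := by
  ext <;> simp only [Quaternion.re_star, Quaternion.imI_star, Quaternion.imJ_star,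
    Quaternion.imK_star] <;> simp [cq]

lemma cq_sum {ι : Type*} (t : Finset ι) (f : ι → ℂ) :
    cq (∑ i ∈ t, f i) = ∑ i ∈ t, cq (f i) := by
  classical
  induction t using Finset.induction with
  | empty => simp [cq_zero]
  | insert _ _ h ih => simp [Finset.sum_insert h, cq_add, ih]

lemma stmt17_key (p : ℕ) (hp : 0 < p) [NeZero p] (s n : Fin p) :
    ∑ k : Fin p,
      star (Complex.exp (-(2 * Real.pi * Complex.I) / p) ^ ((s : ℕ) * (k : ℕ)) / Real.sqrt p) *
        (Complex.exp (-(2 * Real.pi * Complex.I) / p) ^ ((s : ℕ) * ((k + n : Fin p) : ℕ)) /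
          Real.sqrt p)
      = Complex.exp (-(2 * Real.pi * Complex.I) / p) ^ ((s : ℕ) * (n : ℕ)) := by
  set e : ℂ := Complex.exp (-(2 * Real.pi * Complex.I) / p) with he_def
  have hp0 : (p : ℂ) ≠ 0 := Nat.cast_ne_zero.mpr hp.ne'
  have hene : e ≠ 0 := Complex.exp_ne_zero _
  have hep : e ^ p = 1 := by
    rw [he_def, ← Complex.exp_nat_mul]
    have h2 : (p : ℂ) * (-(2 * Real.pi * Complex.I) / p) = -(2 * Real.pi * Complex.I) := by
      field_simp
    rw [h2, Complex.exp_neg, Complex.exp_two_pi_mul_I, inv_one]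
  have hestar : star e = e⁻¹ := by
    rw [he_def, ← Complex.exp_neg, Complex.star_def, ← Complex.exp_conj]
    congr 1
    simp only [map_div₀, map_neg, _root_.map_mul, Complex.conj_I, Complex.conj_ofReal,
      map_ofNat, map_natCast]
    ring
  have hsqrt : ((Real.sqrt p : ℝ) : ℂ) * ((Real.sqrt p : ℝ) : ℂ) = (p : ℂ) := by
    rw [← Complex.ofReal_mul, Real.mul_self_sqrt (Nat.cast_nonneg p)]
    simp
  have hs : ∀ k : Fin p,
      star (e ^ ((s : ℕ) * (k : ℕ)) / (Real.sqrt p : ℂ)) *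
        (e ^ ((s : ℕ) * ((k + n : Fin p) : ℕ)) / (Real.sqrt p : ℂ))
      = e ^ ((s : ℕ) * (n : ℕ)) / p := by
    intro k
    have hval : ((k + n : Fin p) : ℕ) = ((k : ℕ) + (n : ℕ)) % p := Fin.val_add k n
    have h1 : e ^ ((s : ℕ) * (((k : ℕ) + (n : ℕ)) % p)) = e ^ ((s : ℕ) * ((k : ℕ) + (n : ℕ))) := by
      rw [pow_eq_pow_mod _ hep, pow_eq_pow_mod ((s : ℕ) * ((k : ℕ) + (n : ℕ))) hep]
      congr 1
      conv_lhs => rw [Nat.mul_mod, Nat.mod_mod_of_dvd _ dvd_rfl, ← Nat.mul_mod]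
    rw [hval, h1, mul_add, pow_add]
    rw [Complex.star_def, map_div₀, map_pow, Complex.conj_ofReal]
    have hce : (starRingEnd ℂ) e = e⁻¹ := hestar
    rw [hce, inv_pow]
    have hpow : e ^ ((s : ℕ) * (k : ℕ)) ≠ 0 := pow_ne_zero _ hene
    rw [div_mul_div_comm, hsqrt, inv_mul_cancel_left₀ hpow]
  rw [Finset.sum_congr rfl fun k _ => hs k, Finset.sum_const, Finset.card_univ, Fintype.card_fin,
    nsmul_eq_mul, mul_div_cancel₀ _ hp0]

/-- For `O = F_p·l` and a circulant quaternion matrix `Q = circ(q₁,…,q_p)`: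
if `O·Q·O* = Diag(q̂₁,…,q̂_p)`, then (0-indexed)
`q̂_s = ∑_m ω^(s·m)·conj(q_m)`, i.e. `q̂ = √p·F_p·conj(q)`. -/
theorem stmt17 (p : ℕ) (hp : 0 < p)
    (Fp : Matrix (Fin p) (Fin p) ℂ)
    (hF : ∀ s t, Fp s t =
      Complex.exp (-(2 * Real.pi * Complex.I) / p) ^ ((s : ℕ) * (t : ℕ)) / Real.sqrt p)
    (O : Matrix (Fin p) (Fin p) Oct)
    (hO : ∀ s t, O s t = co (Fp s t) * ol)
    (v : Fin p → ℍ[ℝ])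
    (Q : Matrix (Fin p) (Fin p) Oct)
    (hQ : ∀ s t, Q s t = qo (Matrix.circulant v s t))
    (qhat : Fin p → ℍ[ℝ])
    (hdiag : O * Q * Oᴴ = Matrix.diagonal fun s => qo (qhat s)) :
    ∀ s, qhat s = ∑ m : Fin p,
      cq (Complex.exp (-(2 * Real.pi * Complex.I) / p) ^ ((s : ℕ) * (m : ℕ))) *
        star (v m) := by
  haveI : NeZero p := ⟨hp.ne'⟩
  intro s
  set e : ℂ := Complex.exp (-(2 * Real.pi * Complex.I) / p) with he_def
  have hkey : ∀ n : Fin p,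
      ∑ k : Fin p, star (Fp s k) * Fp s (k + n) = e ^ ((s : ℕ) * (n : ℕ)) := by
    intro n
    have := stmt17_key p hp s n
    rw [← this]
    refine Finset.sum_congr rfl fun k _ => ?_
    rw [hF s k, hF s (k + n)]
  have hO' : ∀ a b, O a b = ((0 : ℍ[ℝ]), cq (Fp a b)) := by
    intro a b
    rw [hO, oct_mul_def]
    show ((cq (Fp a b) * 0 - star (1 : ℍ[ℝ]) * 0, 1 * cq (Fp a b) + 0 * star (0 : ℍ[ℝ])) : Oct) = _
    simp
  have hOQ : ∀ k, (O * Q) s k = ((0 : ℍ[ℝ]), ∑ m : Fin p, cq (Fp s m) * star (v (m - k))) := by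
    intro k
    rw [Matrix.mul_apply]
    refine (oct_sum_eq _ _ (fun _ => (0 : ℍ[ℝ])) (fun m => cq (Fp s m) * star (v (m - k)))
      fun m _ => ?_).trans ?_
    · rw [hO' s m, hQ, Matrix.circulant_apply]
      show ((0 * v (m - k) - star (0 : ℍ[ℝ]) * cq (Fp s m),
          0 * 0 + cq (Fp s m) * star (v (m - k))) : Oct) = _
      simp [qo]
    · rw [Finset.sum_const, smul_zero]
  have h := congrFun (congrFun hdiag s) s
  rw [Matrix.diagonal_apply_eq, Matrix.mul_apply] at h
  have h2 : ∑ k : Fin p, (O * Q) s k * Oᴴ k s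
      = (∑ k : Fin p, star (cq (Fp s k)) * ∑ m : Fin p, cq (Fp s m) * star (v (m - k)),
          ∑ _k : Fin p, (0 : ℍ[ℝ])) := by
    refine oct_sum_eq _ _ _ _ fun k _ => ?_
    rw [hOQ k, Matrix.conjTranspose_apply, hO' s k]
    show ((0 * star (0 : ℍ[ℝ]) -
        star (-cq (Fp s k)) * ∑ m : Fin p, cq (Fp s m) * star (v (m - k)),
        -cq (Fp s k) * 0 +
        (∑ m : Fin p, cq (Fp s m) * star (v (m - k))) * star (star (0 : ℍ[ℝ]))) : Oct) = _
    simp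
  rw [h2] at h
  have h3 : qhat s
      = ∑ k : Fin p, star (cq (Fp s k)) * ∑ m : Fin p, cq (Fp s m) * star (v (m - k)) :=
    (congrArg Prod.fst h).symm
  rw [h3]
  have h4 : ∀ k : Fin p, star (cq (Fp s k)) * ∑ m : Fin p, cq (Fp s m) * star (v (m - k))
      = ∑ n : Fin p, cq (star (Fp s k) * Fp s (k + n)) * star (v n) := by
    intro k
    rw [Finset.mul_sum]
    refine (Fintype.sum_equiv (Equiv.addLeft k)
      (fun n => cq (star (Fp s k) * Fp s (k + n)) * star (v n)) _ fun n => ?_).symm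
    simp only [Equiv.coe_addLeft]
    rw [add_sub_cancel_left, cq_mul, cq_star, mul_assoc]
  calc ∑ k : Fin p, star (cq (Fp s k)) * ∑ m : Fin p, cq (Fp s m) * star (v (m - k))
      = ∑ k : Fin p, ∑ n : Fin p, cq (star (Fp s k) * Fp s (k + n)) * star (v n) :=
        Finset.sum_congr rfl fun k _ => h4 k
    _ = ∑ n : Fin p, ∑ k : Fin p, cq (star (Fp s k) * Fp s (k + n)) * star (v n) :=
        Finset.sum_comm
    _ = ∑ n : Fin p, cq (e ^ ((s : ℕ) * (n : ℕ))) * star (v n) := by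
        refine Finset.sum_congr rfl fun n _ => ?_
        rw [← Finset.sum_mul, ← cq_sum, hkey n]
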